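/- Let G be a group with finite generating set A whose Cayley graph is Morse local-to-global, and let M be a Morse gauge with associated local scale B_M and regular language L_M of (B_M; M)-locally Morse geodesic words. Then the language Q_M = { (u,v) ∈ (A × A)* : u, v ∈ L_M and u, v represent the same element of G } is regular. -/

import Mathlib

open Classical

/-- Evaluation in `G` of a word over the alphabet `A`. -/
def wordEval {G : Type} [Group G] {A : Type} (π : A → G) (w : List A) : G :=
  (w.map π).prod

/-- `π : A → G` generates `G` (positive words suffice; the generating set is
assumed symmetric, see `SymmetricGen`). -/
def Generates {G : Type} [Group G] {A : Type} (π : A → G) : Prop :=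
  ∀ g : G, ∃ w : List A, wordEval π w = g

/-- The generating set is symmetric: `A = A⁻¹`. -/
def SymmetricGen {G : Type} [Group G] {A : Type} (π : A → G) : Prop :=
  ∀ a : A, ∃ b : A, π b = (π a)⁻¹

/-- The word length of `g` with respect to the generating map `π`. -/
noncomputable def wordLength {G : Type} [Group G] {A : Type} (π : A → G) (g : G) : ℕ :=
  sInf {n : ℕ | ∃ w : List A, w.length = n ∧ wordEval π w = g}

/-- The word metric on `G` induced by the generating map `π`. -/
noncomputable def wordDist {G : Type} [Group G] {A : Type} (π : A → G) (g h : G) : ℕ :=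
  wordLength π (g⁻¹ * h)

/-- A Morse gauge: a function `M : (k, c) ↦ M(k,c)`. -/
def MorseGauge : Type := ℝ → ℝ → ℝ

/-- `q : {0,…,n} → G` is a discrete `(k,c)`-quasi-geodesic in the Cayley
graph of `G` with respect to `π`. -/
noncomputable def IsDiscreteQG {G : Type} [Group G] {A : Type} (π : A → G)
    (k c : ℝ) (q : ℕ → G) (n : ℕ) : Prop :=
  ∀ i ≤ n, ∀ j ≤ n,
    (1 / k) * |(i : ℝ) - (j : ℝ)| - c ≤ (wordDist π (q i) (q j) : ℝ) ∧
    (wordDist π (q i) (q j) : ℝ) ≤ k * |(i : ℝ) - (j : ℝ)| + c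

/-- `q : {0,…,n} → G` is a discrete geodesic in the Cayley graph. -/
def IsDiscreteGeodesic {G : Type} [Group G] {A : Type} (π : A → G)
    (q : ℕ → G) (n : ℕ) : Prop :=
  ∀ i ≤ n, ∀ j ≤ n, wordDist π (q i) (q j) = Nat.dist i j

/-- The discrete path `q : {0,…,n} → G` is `M`-Morse: every discrete
`(k,c)`-quasi-geodesic with endpoints on `q` stays within `M k c` of the
subsegment of `q` between those endpoints. -/
def IsMorsePath {G : Type} [Group G] {A : Type} (π : A → G)
    (M : MorseGauge) (q : ℕ → G) (n : ℕ) : Prop :=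
  ∀ k c : ℝ, 1 ≤ k → 0 ≤ c →
    ∀ (p : ℕ → G) (m : ℕ), IsDiscreteQG π k c p m →
      ∀ i j : ℕ, i ≤ j → j ≤ n → p 0 = q i → p m = q j →
        ∀ l ≤ m, ∃ i' : ℕ, i ≤ i' ∧ i' ≤ j ∧ (wordDist π (p l) (q i') : ℝ) ≤ M k c

/-- The path in the Cayley graph labeled by the word `w`, starting at the
identity: `i ↦` the evaluation of the `i`-th prefix of `w`. -/
def wordPath {G : Type} [Group G] {A : Type} (π : A → G) (w : List A) (i : ℕ) : G :=
  wordEval π (w.take i)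

/-- `w` is a geodesic word: its length realizes the word length of the element
it represents. -/
def IsGeodesicWord {G : Type} [Group G] {A : Type} (π : A → G) (w : List A) : Prop :=
  w.length = wordLength π (wordEval π w)

/-- The path labeled by `w` is a `(B; M)`-local Morse geodesic: every subpath
of length at most `B` is an `M`-Morse (geodesic) path. -/
def IsLocalMorseWord {G : Type} [Group G] {A : Type} (π : A → G)
    (M : MorseGauge) (B : ℝ) (w : List A) : Prop :=
  ∀ i j : ℕ, i ≤ j → j ≤ w.length → (j : ℝ) - (i : ℝ) ≤ B →
    IsMorsePath π M (fun t => wordPath π w (i + t)) (j - i)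

/-- `q : {0,…,n} → G` is a `(B; M; k, c)`-local Morse quasi-geodesic. -/
noncomputable def IsLocalMorseQG {G : Type} [Group G] {A : Type} (π : A → G)
    (B : ℝ) (M : MorseGauge) (k c : ℝ) (q : ℕ → G) (n : ℕ) : Prop :=
  ∀ i j : ℕ, i ≤ j → j ≤ n → (j : ℝ) - (i : ℝ) ≤ B →
    IsDiscreteQG π k c (fun t => q (i + t)) (j - i) ∧
    IsMorsePath π M (fun t => q (i + t)) (j - i)

/-- The Cayley graph of `G` with respect to `π` has the Morse local-to-global
property: local Morse quasi-geodesics of sufficiently large local scale are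
global Morse quasi-geodesics. -/
noncomputable def MorseLocalToGlobal {G : Type} [Group G] {A : Type} (π : A → G) : Prop :=
  ∀ (M : MorseGauge) (k c : ℝ), 1 ≤ k → 0 ≤ c →
    ∃ (B : ℝ) (M' : MorseGauge) (k' c' : ℝ), 0 ≤ B ∧ 1 ≤ k' ∧ 0 ≤ c' ∧
      ∀ (q : ℕ → G) (n : ℕ), IsLocalMorseQG π B M k c q n →
        IsDiscreteQG π k' c' q n ∧ IsMorsePath π M' q n

namespace MyAux

variable {G : Type} [Group G] {A : Type}

theorem wordEval_append (π : A → G) (u v : List A) :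
    wordEval π (u ++ v) = wordEval π u * wordEval π v := by
  simp [wordEval]

theorem wordEval_nil (π : A → G) : wordEval π ([] : List A) = 1 := rfl

theorem wordLength_le_of_eval (π : A → G) {w : List A} {g : G}
    (h : wordEval π w = g) : wordLength π g ≤ w.length :=
  Nat.sInf_le ⟨w, rfl, h⟩

theorem exists_geodesic_word (π : A → G) (hgen : Generates π) (g : G) :
    ∃ w : List A, w.length = wordLength π g ∧ wordEval π w = g := by
  have hne : {n : ℕ | ∃ w : List A, w.length = n ∧ wordEval π w = g}.Nonempty := by
    obtain ⟨w, hw⟩ := hgen g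
    exact ⟨w.length, w, rfl, hw⟩
  exact Nat.sInf_mem hne

theorem wordLength_one (π : A → G) : wordLength π (1 : G) = 0 :=
  Nat.le_zero.mp (wordLength_le_of_eval π (wordEval_nil π))

theorem wordLength_mul_le (π : A → G) (hgen : Generates π) (g h : G) :
    wordLength π (g * h) ≤ wordLength π g + wordLength π h := by
  obtain ⟨u, hu, hue⟩ := exists_geodesic_word π hgen g
  obtain ⟨v, hv, hve⟩ := exists_geodesic_word π hgen h
  calc wordLength π (g * h) ≤ (u ++ v).length :=
        wordLength_le_of_eval π (by rw [wordEval_append, hue, hve])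
    _ = wordLength π g + wordLength π h := by simp [hu, hv]

theorem exists_inv_word (π : A → G) (hsym : SymmetricGen π) (w : List A) :
    ∃ w' : List A, w'.length = w.length ∧ wordEval π w' = (wordEval π w)⁻¹ := by
  induction w with
  | nil => exact ⟨[], rfl, by simp [wordEval]⟩
  | cons a t ih =>
    obtain ⟨t', ht, hte⟩ := ih
    obtain ⟨b, hb⟩ := hsym a
    refine ⟨t' ++ [b], by simp [ht], ?_⟩
    rw [wordEval_append, hte]
    simp [wordEval, hb]

theorem wordLength_inv (π : A → G) (hgen : Generates π) (hsym : SymmetricGen π) (g : G) :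
    wordLength π g⁻¹ = wordLength π g := by
  have key : ∀ x : G, wordLength π x⁻¹ ≤ wordLength π x := by
    intro x
    obtain ⟨u, hu, hue⟩ := exists_geodesic_word π hgen x
    obtain ⟨u', hu', hue'⟩ := exists_inv_word π hsym u
    calc wordLength π x⁻¹ ≤ u'.length := wordLength_le_of_eval π (by rw [hue', hue])
      _ = wordLength π x := by rw [hu', hu]
  exact le_antisymm (key g) (by simpa using key g⁻¹)

theorem wordDist_self (π : A → G) (g : G) : wordDist π g g = 0 := by
  simp [wordDist, wordLength_one]

theorem wordDist_symm (π : A → G) (hgen : Generates π) (hsym : SymmetricGen π) (g h : G) :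
    wordDist π g h = wordDist π h g := by
  unfold wordDist
  rw [← wordLength_inv π hgen hsym (g⁻¹ * h)]
  congr 1
  group

theorem wordDist_triangle (π : A → G) (hgen : Generates π) (g k h : G) :
    wordDist π g h ≤ wordDist π g k + wordDist π k h := by
  unfold wordDist
  calc wordLength π (g⁻¹ * h) = wordLength π ((g⁻¹ * k) * (k⁻¹ * h)) := by group
    _ ≤ _ := wordLength_mul_le π hgen _ _

theorem wordDist_left_inv (π : A → G) (g x y : G) :
    wordDist π (g * x) (g * y) = wordDist π x y := by
  unfold wordDist
  congr 1
  group

-- language quotient machinery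
def langQuot {T : Type} (L : Language T) (p : List T) : Language T := {q | p ++ q ∈ L}

theorem isRegular_of_finite_quot {T : Type} (L : Language T)
    (h : (Set.range (langQuot L)).Finite) : L.IsRegular := by
  classical
  haveI : Finite ↥(Set.range (langQuot L)) := h.to_subtype
  refine ⟨↥(Set.range (langQuot L)), Fintype.ofFinite _, ?_, ?_⟩
  · exact
      { step := fun s a =>
          ⟨{q | a :: q ∈ s.val}, by
            obtain ⟨p, hp⟩ := s.2
            refine ⟨p ++ [a], ?_⟩
            ext q
            simp only [langQuot, Set.mem_setOf_eq, List.append_assoc, List.cons_append,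
              List.nil_append, ← hp]
            rfl⟩
        start := ⟨langQuot L [], ⟨[], rfl⟩⟩
        accept := {s | [] ∈ s.val} }
  · set M : DFA T ↥(Set.range (langQuot L)) :=
      { step := fun s a =>
          ⟨{q | a :: q ∈ s.val}, by
            obtain ⟨p, hp⟩ := s.2
            refine ⟨p ++ [a], ?_⟩
            ext q
            simp only [langQuot, Set.mem_setOf_eq, List.append_assoc, List.cons_append,
              List.nil_append, ← hp]
            rfl⟩
        start := ⟨langQuot L [], ⟨[], rfl⟩⟩
        accept := {s | [] ∈ s.val} } with hM
    have key : ∀ (x : List T) (s : ↥(Set.range (langQuot L))),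
        (M.evalFrom s x).val = {q | x ++ q ∈ s.val} := by
      intro x
      induction x with
      | nil => intro s; ext q; exact Iff.rfl
      | cons a x ih =>
        intro s
        have : M.evalFrom s (a :: x) = M.evalFrom (M.step s a) x := rfl
        rw [this, ih]
        rfl
    ext x
    have hx : x ∈ M.accepts ↔ [] ∈ (M.evalFrom M.start x).val := Iff.rfl
    rw [hx, key]
    show x ++ [] ∈ langQuot L [] ↔ x ∈ L
    simp only [langQuot, List.append_nil, List.nil_append, Set.mem_setOf_eq]
    exact Iff.rfl
end MyAux


namespace MyAux2
open MyAux
variable {G : Type} [Group G] {A : Type}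

theorem natdist_cast (i j : ℕ) : (Nat.dist i j : ℝ) = |(i : ℝ) - (j : ℝ)| := by
  rcases le_total i j with h | h
  · have h' : (i : ℝ) ≤ (j : ℝ) := by exact_mod_cast h
    rw [Nat.dist_eq_sub_of_le h, Nat.cast_sub h, abs_sub_comm,
      abs_of_nonneg (sub_nonneg.mpr h')]
  · have h' : (j : ℝ) ≤ (i : ℝ) := by exact_mod_cast h
    rw [Nat.dist_eq_sub_of_le_right h, Nat.cast_sub h,
      abs_of_nonneg (sub_nonneg.mpr h')]

theorem geodesic_prefix (π : A → G) (hgen : Generates π) {u v : List A}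
    (h : IsGeodesicWord π (u ++ v)) : IsGeodesicWord π u := by
  obtain ⟨u₀, hu₀l, hu₀e⟩ := exists_geodesic_word π hgen (wordEval π u)
  have h1 : (u ++ v).length ≤ (u₀ ++ v).length := by
    rw [h]
    exact wordLength_le_of_eval π (by rw [wordEval_append, wordEval_append, hu₀e])
  have h2 : u.length ≤ u₀.length := by
    simpa using h1
  exact le_antisymm (le_trans h2 (le_of_eq hu₀l)) (wordLength_le_of_eval π rfl)

theorem geodesic_suffix (π : A → G) (hgen : Generates π) {u v : List A}
    (h : IsGeodesicWord π (u ++ v)) : IsGeodesicWord π v := by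
  obtain ⟨v₀, hv₀l, hv₀e⟩ := exists_geodesic_word π hgen (wordEval π v)
  have h1 : (u ++ v).length ≤ (u ++ v₀).length := by
    rw [h]
    exact wordLength_le_of_eval π (by rw [wordEval_append, wordEval_append, hv₀e])
  have h2 : v.length ≤ v₀.length := by simpa using h1
  exact le_antisymm (le_trans h2 (le_of_eq hv₀l)) (wordLength_le_of_eval π rfl)

theorem wordPath_zero (π : A → G) (w : List A) : wordPath π w 0 = 1 := by
  simp [wordPath, wordEval]

theorem wordPath_full (π : A → G) (w : List A) {i : ℕ} (h : w.length ≤ i) :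
    wordPath π w i = wordEval π w := by
  simp [wordPath, List.take_of_length_le h]

theorem wordPath_sub (π : A → G) (w : List A) {i j : ℕ} (hij : i ≤ j) :
    (wordPath π w i)⁻¹ * wordPath π w j = wordEval π ((w.take j).drop i) := by
  have h1 : w.take j = w.take i ++ (w.take j).drop i := by
    nth_rewrite 1 [← List.take_append_drop i (w.take j)]
    rw [List.take_take, min_eq_left hij]
  unfold wordPath
  nth_rewrite 1 [h1]
  rw [wordEval_append]
  group

theorem wordDist_path (π : A → G) (x y : G) : wordDist π x y = wordLength π (x⁻¹ * y) := rfl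

theorem geodesic_path_dist (π : A → G) (hgen : Generates π) {w : List A}
    (h : IsGeodesicWord π w) {i j : ℕ} (hij : i ≤ j) (hj : j ≤ w.length) :
    wordDist π (wordPath π w i) (wordPath π w j) = j - i := by
  have hmid : IsGeodesicWord π ((w.take j).drop i) := by
    have h1 : IsGeodesicWord π (w.take j) :=
      geodesic_prefix π hgen (by rw [List.take_append_drop]; exact h)
    exact geodesic_suffix π hgen
      (by rw [List.take_append_drop]; exact h1)
  have hlen : ((w.take j).drop i).length = j - i := by
    simp [List.length_drop, List.length_take, min_eq_left hj]
  rw [wordDist_path, wordPath_sub π w hij, ← hmid, hlen]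

theorem geodesic_path_dist' (π : A → G) (hgen : Generates π) (hsym : SymmetricGen π)
    {w : List A} (h : IsGeodesicWord π w) {i j : ℕ} (hi : i ≤ w.length) (hj : j ≤ w.length) :
    wordDist π (wordPath π w i) (wordPath π w j) = Nat.dist i j := by
  rcases le_total i j with hij | hij
  · rw [geodesic_path_dist π hgen h hij hj, Nat.dist_eq_sub_of_le hij]
  · rw [wordDist_symm π hgen hsym, geodesic_path_dist π hgen h hij hi,
      Nat.dist_eq_sub_of_le_right hij]

theorem geodesic_path_QG10 (π : A → G) (hgen : Generates π) (hsym : SymmetricGen π)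
    {w : List A} (h : IsGeodesicWord π w) :
    IsDiscreteQG π 1 0 (wordPath π w) w.length := by
  intro i hi j hj
  rw [geodesic_path_dist' π hgen hsym h hi hj, natdist_cast]
  constructor <;> simp

theorem path_step_le_one (π : A → G) (w : List A) (t : ℕ) :
    wordDist π (wordPath π w t) (wordPath π w (t + 1)) ≤ 1 := by
  rw [wordDist_path, wordPath_sub π w (Nat.le_succ t)]
  calc wordLength π (wordEval π ((w.take (t+1)).drop t)) ≤ ((w.take (t+1)).drop t).length :=
        wordLength_le_of_eval π rfl
    _ ≤ 1 := by
        simp only [List.length_drop, List.length_take]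
        omega

theorem isDQG_translate (π : A → G) {k c : ℝ} (g : G) {p : ℕ → G} {m : ℕ}
    (h : IsDiscreteQG π k c p m) : IsDiscreteQG π k c (fun t => g * p t) m := by
  intro i hi j hj
  simpa [wordDist_left_inv] using h i hi j hj

theorem isMorse_translate (π : A → G) {M : MorseGauge} (g : G) {q : ℕ → G} {n : ℕ}
    (h : IsMorsePath π M q n) : IsMorsePath π M (fun t => g * q t) n := by
  intro k c hk hc p m hp i j hij hjn h0 hm l hl
  obtain ⟨i', h1, h2, h3⟩ := h k c hk hc (fun t => g⁻¹ * p t) m (isDQG_translate π g⁻¹ hp)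
    i j hij hjn (by simp [h0]) (by simp [hm]) l hl
  refine ⟨i', h1, h2, ?_⟩
  have : wordDist π (p l) (g * q i') = wordDist π (g⁻¹ * p l) (q i') := by
    rw [← wordDist_left_inv π g⁻¹]
    simp
  rw [this]
  exact h3

theorem isMorse_congr (π : A → G) {M : MorseGauge} {q q' : ℕ → G} {n : ℕ}
    (hqq : ∀ t ≤ n, q t = q' t) (h : IsMorsePath π M q n) : IsMorsePath π M q' n := by
  intro k c hk hc p m hp i j hij hjn h0 hm l hl
  obtain ⟨i', h1, h2, h3⟩ := h k c hk hc p m hp i j hij hjn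
    (by rw [h0, hqq i (le_trans hij hjn)]) (by rw [hm, hqq j hjn]) l hl
  exact ⟨i', h1, h2, by rwa [hqq i' (le_trans h2 hjn)] at h3⟩

end MyAux2


namespace MyAux3
open MyAux MyAux2
variable {G : Type} [Group G] {A : Type}

theorem path_length (π : A → G) (hgen : Generates π) {w : List A}
    (h : IsGeodesicWord π w) {t : ℕ} (ht : t ≤ w.length) :
    wordLength π (wordPath π w t) = t := by
  have h1 : IsGeodesicWord π (w.take t) :=
    geodesic_prefix π hgen (by rw [List.take_append_drop]; exact h)
  have h2 : (w.take t).length = t := by simp [ht]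
  rw [wordPath, ← h1, h2]

theorem wordDist_one_left (π : A → G) (x : G) : wordDist π 1 x = wordLength π x := by
  simp [wordDist]

theorem wordLength_le_add_dist (π : A → G) (hgen : Generates π) (x y : G) :
    wordLength π x ≤ wordLength π y + wordDist π y x := by
  have h : y * (y⁻¹ * x) = x := by group
  calc wordLength π x = wordLength π (y * (y⁻¹ * x)) := by rw [h]
    _ ≤ wordLength π y + wordLength π (y⁻¹ * x) := wordLength_mul_le π hgen _ _
    _ = wordLength π y + wordDist π y x := rfl

theorem LM_prefix (π : A → G) {M : MorseGauge} {B : ℝ} {u v : List A}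
    (h : IsLocalMorseWord π M B (u ++ v)) : IsLocalMorseWord π M B u := by
  intro i j hij hj hB
  have hj2 : j ≤ (u ++ v).length := by simp; omega
  refine isMorse_congr π (fun t ht => ?_) (h i j hij hj2 hB)
  have hlt : i + t ≤ u.length := by omega
  unfold wordPath
  rw [List.take_append_of_le_length hlt]

theorem P_prefix (π : A → G) (hgen : Generates π) {M : MorseGauge} {B : ℝ} {u v : List A}
    (h : IsGeodesicWord π (u ++ v) ∧ IsLocalMorseWord π M B (u ++ v)) :
    IsGeodesicWord π u ∧ IsLocalMorseWord π M B u :=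
  ⟨geodesic_prefix π hgen h.1, LM_prefix π h.2⟩

theorem fellowA (π : A → G) (hgen : Generates π) (hsym : SymmetricGen π)
    (M' : MorseGauge) {w1 w2 : List A}
    (hm1 : IsMorsePath π M' (wordPath π w1) w1.length)
    (hg1 : IsGeodesicWord π w1) (hg2 : IsGeodesicWord π w2)
    (he : wordEval π w1 = wordEval π w2) {t : ℕ} (ht : t ≤ w1.length) :
    (wordDist π (wordPath π w1 t) (wordPath π w2 t) : ℝ) ≤ 2 * max (M' 1 0) 0 := by
  have hn : w2.length = w1.length := by
    rw [hg1, hg2, he]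
  have hp : IsDiscreteQG π 1 0 (wordPath π w2) w1.length := by
    rw [← hn]; exact geodesic_path_QG10 π hgen hsym hg2
  obtain ⟨i', -, hi'n, hd⟩ := hm1 1 0 le_rfl le_rfl (wordPath π w2) w1.length hp
    0 w1.length (Nat.zero_le _) le_rfl
    (by rw [wordPath_zero, wordPath_zero])
    (by rw [wordPath_full π w2 (le_of_eq hn), wordPath_full π w1 le_rfl, he])
    t ht
  set E := max (M' 1 0) 0 with hE
  have hd' : (wordDist π (wordPath π w2 t) (wordPath π w1 i') : ℝ) ≤ E :=
    hd.trans (le_max_left _ _)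
  set d12 := wordDist π (wordPath π w2 t) (wordPath π w1 i') with hd12
  have ha : wordLength π (wordPath π w2 t) = t := path_length π hgen hg2 (by omega)
  have hb : wordLength π (wordPath π w1 i') = i' := path_length π hgen hg1 hi'n
  have h1 : t ≤ i' + d12 := by
    calc t = wordLength π (wordPath π w2 t) := ha.symm
      _ ≤ wordLength π (wordPath π w1 i') + wordDist π (wordPath π w1 i') (wordPath π w2 t) :=
          wordLength_le_add_dist π hgen _ _
      _ = i' + d12 := by rw [hb, wordDist_symm π hgen hsym]
  have h2 : i' ≤ t + d12 := by
    calc i' = wordLength π (wordPath π w1 i') := hb.symm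
      _ ≤ wordLength π (wordPath π w2 t) + wordDist π (wordPath π w2 t) (wordPath π w1 i') :=
          wordLength_le_add_dist π hgen _ _
      _ = t + d12 := by rw [ha]
  have hnd : Nat.dist t i' ≤ d12 := by
    simp only [Nat.dist]; omega
  have htri : wordDist π (wordPath π w1 t) (wordPath π w2 t) ≤
      Nat.dist t i' + d12 := by
    calc wordDist π (wordPath π w1 t) (wordPath π w2 t)
        ≤ wordDist π (wordPath π w1 t) (wordPath π w1 i') +
          wordDist π (wordPath π w1 i') (wordPath π w2 t) :=
          wordDist_triangle π hgen _ _ _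
      _ = Nat.dist t i' + d12 := by
          rw [geodesic_path_dist' π hgen hsym hg1 ht hi'n, wordDist_symm π hgen hsym]
  have : wordDist π (wordPath π w1 t) (wordPath π w2 t) ≤ d12 + d12 := by omega
  calc (wordDist π (wordPath π w1 t) (wordPath π w2 t) : ℝ) ≤ ((d12 + d12 : ℕ) : ℝ) := by
        exact_mod_cast this
    _ ≤ 2 * E := by push_cast; linarith

theorem nearPoint (π : A → G) (hgen : Generates π) (hsym : SymmetricGen π)
    (M' : MorseGauge) {v z : List A}
    (hmv : IsMorsePath π M' (wordPath π v) v.length)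
    (hgv : IsGeodesicWord π v) (hgz : IsGeodesicWord π z)
    (hdz : wordLength π ((wordEval π z)⁻¹ * wordEval π v) ≤ 1)
    {s : ℕ} (hs : s ≤ v.length) (hEs : max (M' 1 2) 0 ≤ (s : ℝ)) :
    ∃ l ≤ z.length,
      (wordDist π (wordPath π v s) (wordPath π z l) : ℝ) ≤ 3 * max (M' 1 2) 0 + 1 := by
  classical
  set E := max (M' 1 2) 0 with hE
  have hE0 : (0 : ℝ) ≤ E := le_max_right _ _
  set n := v.length with hn
  set m := z.length + 1 with hm
  set q := wordPath π v with hq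
  set p : ℕ → G := fun t => if t ≤ z.length then wordPath π z t else wordEval π v with hpdef
  have hple : ∀ t, t ≤ z.length → p t = wordPath π z t := by
    intro t ht; simp [hpdef, ht]
  have hpm : p m = wordEval π v := by
    simp [hpdef, hm]
  have hzE : wordDist π (wordPath π z z.length) (wordEval π v) ≤ 1 := by
    rw [wordPath_full π z le_rfl]
    exact hdz
  -- p is a (1,2)-quasigeodesic
  have key : ∀ i j, i ≤ j → j ≤ m →
      Nat.dist i j ≤ wordDist π (p i) (p j) + 2 ∧ wordDist π (p i) (p j) ≤ Nat.dist i j + 2 := by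
    intro i j hij hj
    by_cases hjz : j ≤ z.length
    · rw [hple i (hij.trans hjz), hple j hjz,
        geodesic_path_dist' π hgen hsym hgz (hij.trans hjz) hjz]
      omega
    · have hjm : j = m := by omega
      by_cases hiz : i ≤ z.length
      · have hpj : p j = wordEval π v := by rw [hjm, hpm]
        rw [hple i hiz, hpj]
        have d0 : wordDist π (wordPath π z i) (wordPath π z z.length) = z.length - i :=
          geodesic_path_dist π hgen hgz hiz le_rfl
        have t1 : wordDist π (wordPath π z i) (wordEval π v) ≤
            wordDist π (wordPath π z i) (wordPath π z z.length) +
            wordDist π (wordPath π z z.length) (wordEval π v) := wordDist_triangle π hgen _ _ _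
        have t2 : wordDist π (wordPath π z i) (wordPath π z z.length) ≤
            wordDist π (wordPath π z i) (wordEval π v) +
            wordDist π (wordEval π v) (wordPath π z z.length) := wordDist_triangle π hgen _ _ _
        rw [wordDist_symm π hgen hsym (wordEval π v)] at t2
        have hnd : Nat.dist i j = z.length + 1 - i := by
          rw [hjm, hm, Nat.dist_eq_sub_of_le (by omega)]
        omega
      · have hi : i = m := by omega
        rw [hi, hjm, wordDist_self π, Nat.dist_self]
        omega
  have hp : IsDiscreteQG π 1 2 p m := by
    intro i hi j hj
    have hsymm : wordDist π (p i) (p j) = wordDist π (p j) (p i) := wordDist_symm π hgen hsym _ _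
    have hmain : Nat.dist i j ≤ wordDist π (p i) (p j) + 2 ∧
        wordDist π (p i) (p j) ≤ Nat.dist i j + 2 := by
      rcases le_total i j with h | h
      · exact key i j h hj
      · rw [hsymm, Nat.dist_comm]; exact key j i h hi
    constructor
    · rw [one_div_one, one_mul]
      have := hmain.1
      have : (Nat.dist i j : ℝ) ≤ (wordDist π (p i) (p j) : ℝ) + 2 := by exact_mod_cast this
      rw [natdist_cast] at this
      linarith
    · have := hmain.2
      have : (wordDist π (p i) (p j) : ℝ) ≤ (Nat.dist i j : ℝ) + 2 := by exact_mod_cast this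
      rw [natdist_cast] at this
      linarith
  have hI := hmv 1 2 le_rfl (by norm_num) p m hp 0 n (Nat.zero_le _) le_rfl
    (by rw [hple 0 (Nat.zero_le _), wordPath_zero, hq, wordPath_zero])
    (by rw [hpm, hq, wordPath_full π v le_rfl])
  set f : ℕ → ℕ := fun l => if h : l ≤ m then (hI l h).choose else 0 with hf
  have hfspec : ∀ l, (hl : l ≤ m) → f l ≤ n ∧ (wordDist π (p l) (q (f l)) : ℝ) ≤ E := by
    intro l hl
    have : f l = (hI l hl).choose := by rw [hf]; simp [hl]
    rw [this]
    obtain ⟨-, h2, h3⟩ := (hI l hl).choose_spec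
    exact ⟨h2, h3.trans (le_max_left _ _)⟩
  have hqlen : ∀ i, i ≤ n → wordLength π (q i) = i := fun i hi => path_length π hgen hgv hi
  have hqd : ∀ i j, i ≤ j → j ≤ n → wordDist π (q i) (q j) = j - i := fun i j hij hj =>
    geodesic_path_dist π hgen hgv hij hj
  set Pp : ℕ → Prop := fun l => f l ≤ s with hPp
  have h0 : Pp 0 := by
    obtain ⟨hf0n, hf0d⟩ := hfspec 0 (Nat.zero_le _)
    have hp0 : p 0 = 1 := by rw [hple 0 (Nat.zero_le _), wordPath_zero]
    rw [hp0, wordDist_one_left, hqlen (f 0) hf0n] at hf0d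
    have : (f 0 : ℝ) ≤ (s : ℝ) := hf0d.trans hEs
    exact_mod_cast this
  set lstar := Nat.findGreatest Pp m with hlstar
  have hls : Pp lstar := Nat.findGreatest_spec (Nat.zero_le m) h0
  have hlm : lstar ≤ m := Nat.findGreatest_le m
  rcases eq_or_lt_of_le hlm with heq | hlt
  · -- lstar = m
    obtain ⟨hfmn, hfmd⟩ := hfspec m le_rfl
    have hfms : f m ≤ s := by rw [heq] at hls; exact hls
    have hqnm : wordDist π (q n) (q (f m)) = n - f m := by
      rw [wordDist_symm π hgen hsym]; exact hqd (f m) n hfmn le_rfl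
    have hpmq : p m = q n := by rw [hpm, hq, wordPath_full π v le_rfl]
    have h1 : ((n - f m : ℕ) : ℝ) ≤ E := by
      rw [hpmq, hqnm] at hfmd; exact hfmd
    have h2 : ((n - s : ℕ) : ℝ) ≤ E :=
      le_trans (by exact_mod_cast Nat.sub_le_sub_left hfms n) h1
    refine ⟨z.length, le_rfl, ?_⟩
    have hqnv : q n = wordEval π v := wordPath_full π v le_rfl
    have e2 : wordDist π (q n) (wordPath π z z.length) ≤ 1 := by
      rw [hqnv, wordDist_symm π hgen hsym]; exact hzE
    have t1 : wordDist π (q s) (wordPath π z z.length) ≤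
        wordDist π (q s) (q n) + wordDist π (q n) (wordPath π z z.length) :=
      wordDist_triangle π hgen _ _ _
    have e1 : wordDist π (q s) (q n) = n - s := hqd s n hs le_rfl
    have hfin : wordDist π (q s) (wordPath π z z.length) ≤ (n - s) + 1 := by omega
    have hfin' : (wordDist π (q s) (wordPath π z z.length) : ℝ) ≤ ((n - s : ℕ) : ℝ) + 1 := by
      exact_mod_cast hfin
    show (wordDist π (q s) (wordPath π z z.length) : ℝ) ≤ 3 * E + 1
    linarith
  · -- lstar < m
    have hl1m : lstar + 1 ≤ m := hlt
    have hgt : ¬ Pp (lstar + 1) :=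
      Nat.findGreatest_is_greatest (Nat.lt_succ_self _) hl1m
    have hfl := hfspec lstar (le_of_lt hlt)
    have hfl1 := hfspec (lstar + 1) hl1m
    have hflls : f lstar ≤ s := hls
    have hfl1s : s < f (lstar + 1) := not_le.mp hgt
    have hstep : wordDist π (p lstar) (p (lstar + 1)) ≤ 1 := by
      by_cases h : lstar + 1 ≤ z.length
      · rw [hple lstar (by omega), hple (lstar + 1) h]
        exact path_step_le_one π z lstar
      · have h1 : lstar = z.length := by omega
        have h2 : lstar + 1 = m := by omega
        have e1 : p lstar = wordPath π z z.length := by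
          rw [hple lstar (by omega), h1]
        have e2 : p (lstar + 1) = wordEval π v := by rw [h2, hpm]
        rw [e1, e2]
        exact hzE
    have hdq : wordDist π (q (f lstar)) (q (f (lstar + 1))) = f (lstar + 1) - f lstar :=
      hqd _ _ (by omega) hfl1.1
    have t1 : wordDist π (q (f lstar)) (q (f (lstar + 1))) ≤
        wordDist π (q (f lstar)) (p lstar) + wordDist π (p lstar) (q (f (lstar + 1))) :=
      wordDist_triangle π hgen _ _ _
    have t2 : wordDist π (p lstar) (q (f (lstar + 1))) ≤
        wordDist π (p lstar) (p (lstar + 1)) + wordDist π (p (lstar + 1)) (q (f (lstar + 1))) :=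
      wordDist_triangle π hgen _ _ _
    have c1 : (wordDist π (q (f lstar)) (p lstar) : ℝ) ≤ E := by
      rw [wordDist_symm π hgen hsym]; exact hfl.2
    have c2 : (wordDist π (p (lstar + 1)) (q (f (lstar + 1))) : ℝ) ≤ E := hfl1.2
    have c3 : (wordDist π (p lstar) (p (lstar + 1)) : ℝ) ≤ 1 := by exact_mod_cast hstep
    have t1' : (wordDist π (q (f lstar)) (q (f (lstar + 1))) : ℝ) ≤
        (wordDist π (q (f lstar)) (p lstar) : ℝ) + (wordDist π (p lstar) (q (f (lstar + 1))) : ℝ) := by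
      exact_mod_cast t1
    have t2' : (wordDist π (p lstar) (q (f (lstar + 1))) : ℝ) ≤
        (wordDist π (p lstar) (p (lstar + 1)) : ℝ) +
        (wordDist π (p (lstar + 1)) (q (f (lstar + 1))) : ℝ) := by exact_mod_cast t2
    have hreal : ((f (lstar + 1) - f lstar : ℕ) : ℝ) ≤ E + 1 + E := by
      rw [hdq] at t1'
      linarith
    have hsub : s - f lstar ≤ f (lstar + 1) - f lstar :=
      Nat.sub_le_sub_right (le_of_lt hfl1s) _
    have hsf : ((s - f lstar : ℕ) : ℝ) ≤ E + 1 + E :=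
      le_trans (by exact_mod_cast hsub) hreal
    refine ⟨lstar, by omega, ?_⟩
    have t3 : wordDist π (q s) (p lstar) ≤
        wordDist π (q s) (q (f lstar)) + wordDist π (q (f lstar)) (p lstar) :=
      wordDist_triangle π hgen _ _ _
    have e3 : wordDist π (q s) (q (f lstar)) = s - f lstar := by
      rw [wordDist_symm π hgen hsym]; exact hqd _ _ hflls hs
    have t3' : (wordDist π (q s) (p lstar) : ℝ) ≤
        ((s - f lstar : ℕ) : ℝ) + (wordDist π (q (f lstar)) (p lstar) : ℝ) := by
      rw [← e3]; exact_mod_cast t3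
    have hpl : p lstar = wordPath π z lstar := hple lstar (by omega)
    rw [← hpl]
    show (wordDist π (q s) (p lstar) : ℝ) ≤ 3 * E + 1
    linarith

end MyAux3


namespace MyAux4
open MyAux MyAux2 MyAux3
variable {G : Type} [Group G] {A : Type}

theorem path_shift (π : A → G) (u : List A) (i t : ℕ) :
    wordPath π u (i + t) = wordPath π u i * wordPath π (u.drop i) t := by
  unfold wordPath
  rw [List.take_add, wordEval_append]

theorem cone_step (π : A → G) (hgen : Generates π) (hsym : SymmetricGen π)
    {M M' : MorseGauge} {B : ℝ}
    (hloc : ∀ w : List A, IsGeodesicWord π w → IsLocalMorseWord π M B w →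
      IsMorsePath π M' (wordPath π w) w.length)
    {K₂n : ℕ} (hK₂ : 3 * max (M' 1 2) 0 + 1 ≤ (K₂n : ℝ))
    {w w' : List A}
    (hφ : ∀ h : G, wordLength π h ≤ K₂n →
      (wordLength π (wordEval π w * h) : ℤ) - w.length
        = (wordLength π (wordEval π w' * h) : ℤ) - w'.length)
    (hEw' : max (M' 1 2) 0 ≤ (w'.length : ℝ))
    {y : List A} {a : A}
    (hw'y : IsGeodesicWord π (w' ++ y) ∧ IsLocalMorseWord π M B (w' ++ y))
    (hgeod : IsGeodesicWord π (w ++ (y ++ [a]))) :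
    wordLength π (wordEval π (w' ++ (y ++ [a]))) = w'.length + y.length + 1 := by
  by_contra hne
  have hub : wordLength π (wordEval π (w' ++ (y ++ [a]))) ≤ w'.length + y.length + 1 := by
    have := wordLength_le_of_eval π (rfl :
      wordEval π (w' ++ (y ++ [a])) = wordEval π (w' ++ (y ++ [a])))
    simp at this; omega
  have hlt : wordLength π (wordEval π (w' ++ (y ++ [a]))) ≤ w'.length + y.length := by omega
  obtain ⟨z, hzl, hze⟩ := exists_geodesic_word π hgen (wordEval π (w' ++ (y ++ [a])))
  have hzlen : z.length ≤ w'.length + y.length := by omega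
  have hgz : IsGeodesicWord π z := by
    show z.length = wordLength π (wordEval π z)
    rw [hze]; exact hzl
  have heval1 : wordEval π (w' ++ (y ++ [a])) = wordEval π (w' ++ y) * π a := by
    rw [show w' ++ (y ++ [a]) = (w' ++ y) ++ [a] by simp, wordEval_append]
    congr 1
    simp [wordEval]
  have hdz : wordLength π ((wordEval π z)⁻¹ * wordEval π (w' ++ y)) ≤ 1 := by
    have e : (wordEval π z)⁻¹ * wordEval π (w' ++ y) = (π a)⁻¹ := by
      rw [hze, heval1]; group
    rw [e, wordLength_inv π hgen hsym]
    have h2 := wordLength_le_of_eval π (w := [a]) (show wordEval π [a] = π a by simp [wordEval])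
    simpa using h2
  have hmv := hloc (w' ++ y) hw'y.1 hw'y.2
  have hs : w'.length ≤ (w' ++ y).length := by simp
  obtain ⟨l, hlz, hld⟩ := nearPoint π hgen hsym M' hmv hw'y.1 hgz hdz hs hEw'
  have hpw' : wordPath π (w' ++ y) w'.length = wordEval π w' := by
    rw [wordPath, List.take_left]
  set hG := (wordEval π w')⁻¹ * wordPath π z l with hhdef
  have hhlen : wordLength π hG ≤ K₂n := by
    have h1 : (wordDist π (wordEval π w') (wordPath π z l) : ℝ) ≤ (K₂n : ℝ) := by
      rw [← hpw']; exact hld.trans hK₂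
    exact_mod_cast h1
  have hφh := hφ hG hhlen
  have hev : wordEval π w' * hG = wordPath π z l := by rw [hhdef]; group
  have hl2 : wordLength π (wordEval π w' * hG) = l := by
    rw [hev]; exact path_length π hgen hgz hlz
  obtain ⟨u₀, hu₀l, hu₀e⟩ := exists_geodesic_word π hgen (wordEval π w * hG)
  have hWe : wordEval π (u₀ ++ z.drop l) = wordEval π (w ++ (y ++ [a])) := by
    rw [wordEval_append, hu₀e]
    have h0 : wordEval π (z.take l) * wordEval π (z.drop l) = wordEval π z := by
      rw [← wordEval_append, List.take_append_drop]
    have h1 : wordEval π (z.drop l) = (wordPath π z l)⁻¹ * wordEval π z := by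
      rw [show wordPath π z l = wordEval π (z.take l) from rfl, ← h0]
      group
    rw [h1, hhdef, hze, wordEval_append π w' (y ++ [a]), wordEval_append π w (y ++ [a])]
    group
  have hWlen : wordLength π (wordEval π (w ++ (y ++ [a]))) ≤ u₀.length + (z.length - l) := by
    have := wordLength_le_of_eval π hWe
    simpa using this
  have hgl : w.length + (y.length + 1) = wordLength π (wordEval π (w ++ (y ++ [a]))) := by
    have := hgeod
    unfold IsGeodesicWord at this
    simpa using this
  have hints : (wordLength π (wordEval π w * hG) : ℤ)
      = (w.length : ℤ) - w'.length + l := by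
    rw [hl2] at hφh
    omega
  have e1 : (u₀.length : ℤ) = (w.length : ℤ) - w'.length + l := by
    rw [hu₀l]; exact hints
  omega

theorem LM_transfer (π : A → G) {M : MorseGauge} {B : ℝ} {K : ℕ} (hKB : B ≤ (K : ℝ))
    {w w' x : List A} (hKw : K ≤ w.length) (hKw' : K ≤ w'.length)
    (htail : w.drop (w.length - K) = w'.drop (w'.length - K))
    (hLM : IsLocalMorseWord π M B (w ++ x)) (hLM' : IsLocalMorseWord π M B w') :
    IsLocalMorseWord π M B (w' ++ x) := by
  intro i j hij hj hB
  have hjlen : j ≤ w'.length + x.length := by simpa using hj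
  have hjiK : j - i ≤ K := by
    have h1 : (j : ℝ) - i ≤ (K : ℝ) := hB.trans hKB
    have h2 : (j : ℝ) ≤ (i : ℝ) + K := by linarith
    have h3 : j ≤ i + K := by exact_mod_cast h2
    omega
  by_cases hcase : j ≤ w'.length
  · refine isMorse_congr π (fun t ht => ?_) (hLM' i j hij hcase hB)
    unfold wordPath
    rw [List.take_append_of_le_length (by omega)]
  · push_neg at hcase
    have hiw' : w'.length ≤ i + K := by omega
    set i₂ := i + w.length - w'.length with hi2
    set j₂ := j + w.length - w'.length with hj2
    have hkey : (w' ++ x).drop i = (w ++ x).drop i₂ := by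
      have e1 : w' ++ x = w'.take (w'.length - K) ++ (w'.drop (w'.length - K) ++ x) := by
        rw [← List.append_assoc, List.take_append_drop]
      have e2 : w ++ x = w.take (w.length - K) ++ (w.drop (w.length - K) ++ x) := by
        rw [← List.append_assoc, List.take_append_drop]
      rw [e1, e2, htail]
      have l1 : (w'.take (w'.length - K)).length = w'.length - K := by
        simp
      have l2 : (w.take (w.length - K)).length = w.length - K := by
        simp
      have d1 : i = (w'.take (w'.length - K)).length + (i - (w'.length - K)) := by
        rw [l1]; omega
      have d2 : i₂ = (w.take (w.length - K)).length + (i - (w'.length - K)) := by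
        rw [l2]; omega
      conv_lhs => rw [d1]
      conv_rhs => rw [d2]
      rw [List.drop_length_add_append, List.drop_length_add_append]
    have hj2len : j₂ ≤ (w ++ x).length := by simp; omega
    have hij2 : i₂ ≤ j₂ := by omega
    have hB2 : (j₂ : ℝ) - (i₂ : ℝ) ≤ B := by
      have c1 : j₂ + w'.length = j + w.length := by omega
      have c2 : i₂ + w'.length = i + w.length := by omega
      have c1' : (j₂ : ℝ) + w'.length = (j : ℝ) + w.length := by exact_mod_cast c1
      have c2' : (i₂ : ℝ) + w'.length = (i : ℝ) + w.length := by exact_mod_cast c2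
      linarith
    have hbase := hLM i₂ j₂ hij2 hj2len hB2
    have hndiff : j₂ - i₂ = j - i := by omega
    rw [hndiff] at hbase
    have hs1 : ∀ t, wordPath π (w ++ x) (i₂ + t) =
        wordPath π (w ++ x) i₂ * wordPath π ((w' ++ x).drop i) t := by
      intro t; rw [path_shift, hkey]
    have hs2 : ∀ t, wordPath π (w' ++ x) (i + t) =
        wordPath π (w' ++ x) i * wordPath π ((w' ++ x).drop i) t := by
      intro t; rw [path_shift]
    have hmid : IsMorsePath π M (fun t => wordPath π ((w' ++ x).drop i) t) (j - i) := by
      have h1 := isMorse_translate π (wordPath π (w ++ x) i₂)⁻¹ hbase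
      refine isMorse_congr π (fun t ht => ?_) h1
      show (wordPath π (w ++ x) i₂)⁻¹ * wordPath π (w ++ x) (i₂ + t) =
        wordPath π ((w' ++ x).drop i) t
      rw [hs1 t]; group
    refine isMorse_congr π (fun t ht => ?_)
      (isMorse_translate π (wordPath π (w' ++ x) i) hmid)
    exact (hs2 t).symm

theorem cone_all (π : A → G) (hgen : Generates π) (hsym : SymmetricGen π)
    {M M' : MorseGauge} {B : ℝ}
    (hloc : ∀ w : List A, IsGeodesicWord π w → IsLocalMorseWord π M B w →
      IsMorsePath π M' (wordPath π w) w.length)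
    {K K₂n N : ℕ} (hKB : B ≤ (K : ℝ)) (hK₂ : 3 * max (M' 1 2) 0 + 1 ≤ (K₂n : ℝ))
    (hNK : K ≤ N) (hNE : max (M' 1 2) 0 ≤ (N : ℝ))
    {w w' : List A}
    (hw : IsGeodesicWord π w ∧ IsLocalMorseWord π M B w)
    (hw' : IsGeodesicWord π w' ∧ IsLocalMorseWord π M B w')
    (hNw : N ≤ w.length) (hNw' : N ≤ w'.length)
    (htail : w.drop (w.length - K) = w'.drop (w'.length - K))
    (hφ : ∀ h : G, wordLength π h ≤ K₂n →
      (wordLength π (wordEval π w * h) : ℤ) - w.length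
        = (wordLength π (wordEval π w' * h) : ℤ) - w'.length) :
    ∀ x : List A, (IsGeodesicWord π (w ++ x) ∧ IsLocalMorseWord π M B (w ++ x)) →
      (IsGeodesicWord π (w' ++ x) ∧ IsLocalMorseWord π M B (w' ++ x)) := by
  intro x
  induction x using List.reverseRecOn with
  | nil => intro _; simpa using hw'
  | append_singleton y a ih =>
    intro hwx
    have hwy : IsGeodesicWord π (w ++ y) ∧ IsLocalMorseWord π M B (w ++ y) := by
      have h1 := hwx
      rw [← List.append_assoc] at h1
      exact P_prefix π hgen h1
    have hw'y := ih hwy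
    have hEw' : max (M' 1 2) 0 ≤ (w'.length : ℝ) :=
      le_trans hNE (by exact_mod_cast hNw')
    have hstep := cone_step π hgen hsym hloc hK₂ hφ hEw' hw'y hwx.1
    constructor
    · show (w' ++ (y ++ [a])).length = wordLength π (wordEval π (w' ++ (y ++ [a])))
      rw [hstep]
      simp [List.length_append]
      omega
    · exact LM_transfer π hKB (le_trans hNK hNw) (le_trans hNK hNw') htail hwx.2 hw'.2

end MyAux4


namespace MyAux5
open MyAux MyAux2 MyAux3 MyAux4

noncomputable def tailF {A : Type} (K : ℕ) (w : List A) : List A := w.drop (w.length - K)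

noncomputable def phiF {G : Type} [Group G] {A : Type} (π : A → G) (K₂n : ℕ) (w : List A) :
    {g : G // wordLength π g ≤ K₂n} → ℤ :=
  fun h => max (-(K₂n : ℤ)) (min (K₂n : ℤ)
    ((wordLength π (wordEval π w * h.1) : ℤ) - w.length))

noncomputable def deltaF {G : Type} [Group G] {A : Type} (π : A → G) (R₀ : ℕ)
    (p : List (A × A)) : Option G :=
  if wordLength π ((wordEval π (p.map Prod.fst))⁻¹ * wordEval π (p.map Prod.snd)) ≤ R₀
  then some ((wordEval π (p.map Prod.fst))⁻¹ * wordEval π (p.map Prod.snd)) else none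

noncomputable def dataF {G : Type} [Group G] {A : Type} (π : A → G) (L : Language (A × A))
    (K K₂n R₀ N : ℕ) (p : List (A × A)) :
    Option (List (A × A) ⊕ (List A × List A × ({g : G // wordLength π g ≤ K₂n} → ℤ) ×
      ({g : G // wordLength π g ≤ K₂n} → ℤ) × Option G)) :=
  if (∃ q, p ++ q ∈ L) then
    some (if p.length < N then Sum.inl p
      else Sum.inr (tailF K (p.map Prod.fst), tailF K (p.map Prod.snd),
        phiF π K₂n (p.map Prod.fst), phiF π K₂n (p.map Prod.snd), deltaF π R₀ p))
  else none

variable {G : Type} [Group G] {A : Type}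

theorem phiF_geodesic (π : A → G) (hgen : Generates π) (hsym : SymmetricGen π)
    {K₂n : ℕ} {w : List A} (hg : IsGeodesicWord π w)
    (h : {g : G // wordLength π g ≤ K₂n}) :
    phiF π K₂n w h = (wordLength π (wordEval π w * h.1) : ℤ) - w.length := by
  have b1 : wordLength π (wordEval π w * h.1) ≤ wordLength π (wordEval π w) + wordLength π h.1 :=
    wordLength_mul_le π hgen _ _
  have b2 : wordLength π (wordEval π w) ≤ wordLength π (wordEval π w * h.1) + wordLength π h.1 := by
    have e : wordEval π w = (wordEval π w * h.1) * (h.1)⁻¹ := by group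
    calc wordLength π (wordEval π w) = wordLength π ((wordEval π w * h.1) * (h.1)⁻¹) := by rw [← e]
      _ ≤ wordLength π (wordEval π w * h.1) + wordLength π (h.1)⁻¹ := wordLength_mul_le π hgen _ _
      _ = wordLength π (wordEval π w * h.1) + wordLength π h.1 := by
          rw [wordLength_inv π hgen hsym]
  have hlen : w.length = wordLength π (wordEval π w) := hg
  have hb : wordLength π h.1 ≤ K₂n := h.2
  unfold phiF
  omega

theorem ball_finite [Fintype A] (π : A → G) (hgen : Generates π) (R : ℕ) :
    {g : G | wordLength π g ≤ R}.Finite := by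
  apply Set.Finite.subset ((List.finite_length_le A R).image (wordEval π))
  intro g hg
  obtain ⟨w, hwl, hwe⟩ := exists_geodesic_word π hgen g
  refine ⟨w, ?_, hwe⟩
  simp only [Set.mem_setOf_eq]
  simp only [Set.mem_setOf_eq] at hg
  omega

theorem dataF_finite [Fintype A] (π : A → G) (hgen : Generates π)
    (L : Language (A × A)) (K K₂n R₀ N : ℕ) :
    (Set.range (dataF π L K K₂n R₀ N)).Finite := by
  classical
  haveI : Finite {g : G // wordLength π g ≤ K₂n} := (ball_finite π hgen K₂n).to_subtype
  set PS : Set ({g : G // wordLength π g ≤ K₂n} → ℤ) :=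
    {f | ∀ h, f h ∈ Set.Icc (-(K₂n : ℤ)) (K₂n : ℤ)} with hPS
  have hPSfin : PS.Finite := by
    have he : PS = Set.pi Set.univ (fun _ => Set.Icc (-(K₂n : ℤ)) (K₂n : ℤ)) := by
      ext f
      constructor
      · intro hf i _
        exact hf i
      · intro hf h
        exact hf h (Set.mem_univ h)
    rw [he]
    exact Set.Finite.pi (fun _ => Set.finite_Icc _ _)
  set TS : Set (List A) := {l | l.length ≤ K} with hTS
  have hTSfin : TS.Finite := List.finite_length_le A K
  set DS : Set (Option G) := insert none (some '' {g | wordLength π g ≤ R₀}) with hDS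
  have hDSfin : DS.Finite := ((ball_finite π hgen R₀).image some).insert none
  apply Set.Finite.subset (s := insert none (some ''
    ((Sum.inl '' {l : List (A × A) | l.length < N}) ∪
      (Sum.inr '' (TS ×ˢ TS ×ˢ PS ×ˢ PS ×ˢ DS)))))
  · exact Set.Finite.insert none
      ((((List.finite_length_lt (A × A) N).image _).union
        ((hTSfin.prod (hTSfin.prod (hPSfin.prod (hPSfin.prod hDSfin)))).image _)).image some)
  · rintro d ⟨p, rfl⟩
    unfold dataF
    by_cases hv : ∃ q, p ++ q ∈ L
    · rw [if_pos hv]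
      refine Set.mem_insert_iff.mpr (Or.inr ?_)
      refine ⟨_, ?_, rfl⟩
      by_cases hN : p.length < N
      · rw [if_pos hN]
        exact Or.inl ⟨p, hN, rfl⟩
      · rw [if_neg hN]
        refine Or.inr ⟨_, ?_, rfl⟩
        have htl : ∀ w : List A, tailF K w ∈ TS := by
          intro w
          simp only [hTS, tailF, Set.mem_setOf_eq, List.length_drop]
          omega
        have hps : ∀ w : List A, phiF π K₂n w ∈ PS := by
          intro w
          intro h
          constructor
          · exact le_max_left _ _
          · refine max_le (by omega) (min_le_left _ _)
        have hds : deltaF π R₀ p ∈ DS := by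
          unfold deltaF
          by_cases hδ : wordLength π
              ((wordEval π (p.map Prod.fst))⁻¹ * wordEval π (p.map Prod.snd)) ≤ R₀
          · rw [if_pos hδ]
            exact Set.mem_insert_iff.mpr (Or.inr ⟨_, hδ, rfl⟩)
          · rw [if_neg hδ]
            exact Set.mem_insert _ _
        exact ⟨htl _, htl _, hps _, hps _, hds⟩
    · rw [if_neg hv]
      exact Set.mem_insert _ _

end MyAux5


namespace MyAux6
open MyAux MyAux2 MyAux3 MyAux4 MyAux5

variable {G : Type} [Group G] {A : Type}

theorem quot_eq (π : A → G) (hgen : Generates π) (hsym : SymmetricGen π)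
    {M M' : MorseGauge} {B : ℝ}
    (hloc : ∀ w : List A, IsGeodesicWord π w → IsLocalMorseWord π M B w →
      IsMorsePath π M' (wordPath π w) w.length)
    {K K₂n R₀ N : ℕ} (hKB : B ≤ (K : ℝ)) (hK₂ : 3 * max (M' 1 2) 0 + 1 ≤ (K₂n : ℝ))
    (hNK : K ≤ N) (hNE : max (M' 1 2) 0 ≤ (N : ℝ)) (hR₀ : 2 * max (M' 1 0) 0 ≤ (R₀ : ℝ))
    (L : Language (A × A))
    (hL : L = {p : List (A × A) |
        (IsGeodesicWord π (p.map Prod.fst) ∧ IsLocalMorseWord π M B (p.map Prod.fst)) ∧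
        (IsGeodesicWord π (p.map Prod.snd) ∧ IsLocalMorseWord π M B (p.map Prod.snd)) ∧
        wordEval π (p.map Prod.fst) = wordEval π (p.map Prod.snd)})
    (p p' : List (A × A))
    (h : dataF π L K K₂n R₀ N p = dataF π L K K₂n R₀ N p') :
    langQuot L p = langQuot L p' := by
  classical
  by_cases h1 : ∃ q, p ++ q ∈ L
  · by_cases h2 : ∃ q, p' ++ q ∈ L
    · -- both viable
      unfold dataF at h
      rw [if_pos h1, if_pos h2, Option.some_inj] at h
      -- extract membership facts
      obtain ⟨qw, hqw⟩ := h1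
      obtain ⟨qw', hqw'⟩ := h2
      rw [hL] at hqw hqw'
      have hqw2 : (IsGeodesicWord π ((p ++ qw).map Prod.fst) ∧
          IsLocalMorseWord π M B ((p ++ qw).map Prod.fst)) ∧
          (IsGeodesicWord π ((p ++ qw).map Prod.snd) ∧
            IsLocalMorseWord π M B ((p ++ qw).map Prod.snd)) ∧
          wordEval π ((p ++ qw).map Prod.fst) = wordEval π ((p ++ qw).map Prod.snd) := hqw
      have hqw2' : (IsGeodesicWord π ((p' ++ qw').map Prod.fst) ∧
          IsLocalMorseWord π M B ((p' ++ qw').map Prod.fst)) ∧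
          (IsGeodesicWord π ((p' ++ qw').map Prod.snd) ∧
            IsLocalMorseWord π M B ((p' ++ qw').map Prod.snd)) ∧
          wordEval π ((p' ++ qw').map Prod.fst) = wordEval π ((p' ++ qw').map Prod.snd) := hqw'
      simp only [List.map_append] at hqw2 hqw2'
      obtain ⟨⟨hg1, hl1⟩, ⟨hg2, hl2⟩, he⟩ := hqw2
      obtain ⟨⟨hg1', hl1'⟩, ⟨hg2', hl2'⟩, he'⟩ := hqw2'
      have hPu : IsGeodesicWord π (p.map Prod.fst) ∧ IsLocalMorseWord π M B (p.map Prod.fst) :=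
        P_prefix π hgen ⟨hg1, hl1⟩
      have hPv : IsGeodesicWord π (p.map Prod.snd) ∧ IsLocalMorseWord π M B (p.map Prod.snd) :=
        P_prefix π hgen ⟨hg2, hl2⟩
      have hPu' : IsGeodesicWord π (p'.map Prod.fst) ∧ IsLocalMorseWord π M B (p'.map Prod.fst) :=
        P_prefix π hgen ⟨hg1', hl1'⟩
      have hPv' : IsGeodesicWord π (p'.map Prod.snd) ∧ IsLocalMorseWord π M B (p'.map Prod.snd) :=
        P_prefix π hgen ⟨hg2', hl2'⟩
      -- delta bounds
      have hδgen : ∀ (r : List (A × A)) (qr : List (A × A)),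
          IsGeodesicWord π ((r ++ qr).map Prod.fst) →
          IsLocalMorseWord π M B ((r ++ qr).map Prod.fst) →
          IsGeodesicWord π ((r ++ qr).map Prod.snd) →
          IsLocalMorseWord π M B ((r ++ qr).map Prod.snd) →
          wordEval π ((r ++ qr).map Prod.fst) = wordEval π ((r ++ qr).map Prod.snd) →
          wordLength π ((wordEval π (r.map Prod.fst))⁻¹ * wordEval π (r.map Prod.snd)) ≤ R₀ := by
        intro r qr hga hla hgb hlb heq
        have hm1 := hloc _ hga hla
        have ht : r.length ≤ ((r ++ qr).map Prod.fst).length := by simp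
        have hfa := fellowA π hgen hsym M' hm1 hga hgb heq ht
        have e1 : wordPath π ((r ++ qr).map Prod.fst) r.length = wordEval π (r.map Prod.fst) := by
          rw [wordPath, List.map_append,
            show r.length = (r.map Prod.fst).length by simp, List.take_left]
        have e2 : wordPath π ((r ++ qr).map Prod.snd) r.length = wordEval π (r.map Prod.snd) := by
          rw [wordPath, List.map_append,
            show r.length = (r.map Prod.snd).length by simp, List.take_left]
        rw [e1, e2] at hfa
        have : (wordDist π (wordEval π (r.map Prod.fst)) (wordEval π (r.map Prod.snd)) : ℝ)
            ≤ (R₀ : ℝ) := le_trans hfa hR₀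
        exact_mod_cast this
      have hδp := hδgen p qw (by rw [List.map_append]; exact hg1)
        (by rw [List.map_append]; exact hl1) (by rw [List.map_append]; exact hg2)
        (by rw [List.map_append]; exact hl2) (by rw [List.map_append, List.map_append]; exact he)
      have hδp' := hδgen p' qw' (by rw [List.map_append]; exact hg1')
        (by rw [List.map_append]; exact hl1') (by rw [List.map_append]; exact hg2')
        (by rw [List.map_append]; exact hl2') (by rw [List.map_append, List.map_append]; exact he')
      -- length cases
      by_cases hN1 : p.length < N
      · by_cases hN2 : p'.length < N
        · rw [if_pos hN1, if_pos hN2] at h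
          have : p = p' := by
            simpa using h
          rw [this]
        · rw [if_pos hN1, if_neg hN2] at h
          exact absurd h (by simp)
      · by_cases hN2 : p'.length < N
        · rw [if_neg hN1, if_pos hN2] at h
          exact absurd h (by simp)
        · rw [if_neg hN1, if_neg hN2] at h
          simp only [Sum.inr.injEq, Prod.mk.injEq] at h
          obtain ⟨ht1, ht2, hf1, hf2, hd⟩ := h
          -- delta equality
          unfold deltaF at hd
          rw [if_pos hδp, if_pos hδp', Option.some_inj] at hd
          -- phi equalities
          have hφ1 : ∀ g : G, wordLength π g ≤ K₂n →
              (wordLength π (wordEval π (p.map Prod.fst) * g) : ℤ) - (p.map Prod.fst).length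
                = (wordLength π (wordEval π (p'.map Prod.fst) * g) : ℤ)
                  - (p'.map Prod.fst).length := by
            intro g hgK
            have hc := congrFun hf1 ⟨g, hgK⟩
            rwa [phiF_geodesic π hgen hsym hPu.1, phiF_geodesic π hgen hsym hPu'.1] at hc
          have hφ2 : ∀ g : G, wordLength π g ≤ K₂n →
              (wordLength π (wordEval π (p.map Prod.snd) * g) : ℤ) - (p.map Prod.snd).length
                = (wordLength π (wordEval π (p'.map Prod.snd) * g) : ℤ)
                  - (p'.map Prod.snd).length := by
            intro g hgK
            have hc := congrFun hf2 ⟨g, hgK⟩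
            rwa [phiF_geodesic π hgen hsym hPv.1, phiF_geodesic π hgen hsym hPv'.1] at hc
          -- lengths
          have hNu : N ≤ (p.map Prod.fst).length := by simp; omega
          have hNv : N ≤ (p.map Prod.snd).length := by simp; omega
          have hNu' : N ≤ (p'.map Prod.fst).length := by simp; omega
          have hNv' : N ≤ (p'.map Prod.snd).length := by simp; omega
          -- tails (tailF unfolds to drop)
          have htail1 : (p.map Prod.fst).drop ((p.map Prod.fst).length - K)
              = (p'.map Prod.fst).drop ((p'.map Prod.fst).length - K) := ht1
          have htail2 : (p.map Prod.snd).drop ((p.map Prod.snd).length - K)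
              = (p'.map Prod.snd).drop ((p'.map Prod.snd).length - K) := ht2
          -- cones
          have cone1 := cone_all π hgen hsym hloc hKB hK₂ hNK hNE hPu hPu' hNu hNu' htail1 hφ1
          have cone1' := cone_all π hgen hsym hloc hKB hK₂ hNK hNE hPu' hPu hNu' hNu htail1.symm
            (fun g hg => (hφ1 g hg).symm)
          have cone2 := cone_all π hgen hsym hloc hKB hK₂ hNK hNE hPv hPv' hNv hNv' htail2 hφ2
          have cone2' := cone_all π hgen hsym hloc hKB hK₂ hNK hNE hPv' hPv hNv' hNv htail2.symm
            (fun g hg => (hφ2 g hg).symm)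
          -- final extensionality
          ext q
          show p ++ q ∈ L ↔ p' ++ q ∈ L
          rw [hL]
          have memiff : ∀ r : List (A × A),
              r ∈ ({p : List (A × A) |
                (IsGeodesicWord π (p.map Prod.fst) ∧ IsLocalMorseWord π M B (p.map Prod.fst)) ∧
                (IsGeodesicWord π (p.map Prod.snd) ∧ IsLocalMorseWord π M B (p.map Prod.snd)) ∧
                wordEval π (p.map Prod.fst) = wordEval π (p.map Prod.snd)} : Language (A × A)) ↔
              ((IsGeodesicWord π (r.map Prod.fst) ∧ IsLocalMorseWord π M B (r.map Prod.fst)) ∧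
                (IsGeodesicWord π (r.map Prod.snd) ∧ IsLocalMorseWord π M B (r.map Prod.snd)) ∧
                wordEval π (r.map Prod.fst) = wordEval π (r.map Prod.snd)) := fun r => Iff.rfl
          refine Iff.trans (memiff _) (Iff.trans ?_ (memiff _).symm)
          simp only [List.map_append]
          constructor
          · rintro ⟨hA, hB, hE⟩
            refine ⟨cone1 _ hA, cone2 _ hB, ?_⟩
            rw [wordEval_append, wordEval_append] at hE ⊢
            have hgv' : wordEval π (p'.map Prod.snd) =
                wordEval π (p'.map Prod.fst) *
                  ((wordEval π (p.map Prod.fst))⁻¹ * wordEval π (p.map Prod.snd)) := by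
              rw [hd]; group
            calc wordEval π (p'.map Prod.fst) * wordEval π (q.map Prod.fst)
                = wordEval π (p'.map Prod.fst) * ((wordEval π (p.map Prod.fst))⁻¹ *
                    (wordEval π (p.map Prod.fst) * wordEval π (q.map Prod.fst))) := by group
              _ = wordEval π (p'.map Prod.fst) * ((wordEval π (p.map Prod.fst))⁻¹ *
                    (wordEval π (p.map Prod.snd) * wordEval π (q.map Prod.snd))) := by rw [hE]
              _ = wordEval π (p'.map Prod.fst) * ((wordEval π (p.map Prod.fst))⁻¹ *
                    wordEval π (p.map Prod.snd)) * wordEval π (q.map Prod.snd) := by group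
              _ = wordEval π (p'.map Prod.snd) * wordEval π (q.map Prod.snd) := by rw [← hgv']
          · rintro ⟨hA, hB, hE⟩
            refine ⟨cone1' _ hA, cone2' _ hB, ?_⟩
            rw [wordEval_append, wordEval_append] at hE ⊢
            have hgv : wordEval π (p.map Prod.snd) =
                wordEval π (p.map Prod.fst) *
                  ((wordEval π (p'.map Prod.fst))⁻¹ * wordEval π (p'.map Prod.snd)) := by
              rw [← hd]; group
            calc wordEval π (p.map Prod.fst) * wordEval π (q.map Prod.fst)
                = wordEval π (p.map Prod.fst) * ((wordEval π (p'.map Prod.fst))⁻¹ *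
                    (wordEval π (p'.map Prod.fst) * wordEval π (q.map Prod.fst))) := by group
              _ = wordEval π (p.map Prod.fst) * ((wordEval π (p'.map Prod.fst))⁻¹ *
                    (wordEval π (p'.map Prod.snd) * wordEval π (q.map Prod.snd))) := by rw [hE]
              _ = wordEval π (p.map Prod.fst) * ((wordEval π (p'.map Prod.fst))⁻¹ *
                    wordEval π (p'.map Prod.snd)) * wordEval π (q.map Prod.snd) := by group
              _ = wordEval π (p.map Prod.snd) * wordEval π (q.map Prod.snd) := by rw [← hgv]
    · exfalso
      unfold dataF at h
      rw [if_pos h1, if_neg h2] at h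
      exact absurd h (by simp)
  · by_cases h2 : ∃ q, p' ++ q ∈ L
    · exfalso
      unfold dataF at h
      rw [if_neg h1, if_pos h2] at h
      exact absurd h (by simp)
    · ext q
      constructor
      · intro hq
        exact absurd ⟨q, hq⟩ h1
      · intro hq
        exact absurd ⟨q, hq⟩ h2

end MyAux6


open MyAux MyAux2 MyAux3 MyAux4 MyAux5 MyAux6

/-- If the Cayley graph of `G` is Morse local-to-global, then
the language `Q_M` over `A × A` of pairs of words of `L_M` representing the
same group element is regular. -/
theorem regular_equality_recognizer {G : Type} [Group G] {A : Type} [Fintype A]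
    (π : A → G) (hgen : Generates π) (hsym : SymmetricGen π)
    (hltg : MorseLocalToGlobal π)
    (M M' : MorseGauge) (B : ℝ) (hB : 0 ≤ B)
    (hloc : ∀ w : List A, IsGeodesicWord π w → IsLocalMorseWord π M B w →
      IsMorsePath π M' (wordPath π w) w.length) :
    Language.IsRegular
      ({p : List (A × A) |
        (IsGeodesicWord π (p.map Prod.fst) ∧ IsLocalMorseWord π M B (p.map Prod.fst)) ∧
        (IsGeodesicWord π (p.map Prod.snd) ∧ IsLocalMorseWord π M B (p.map Prod.snd)) ∧
        wordEval π (p.map Prod.fst) = wordEval π (p.map Prod.snd)} : Language (A × A)) := by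
  classical
  set L : Language (A × A) :=
    ({p : List (A × A) |
        (IsGeodesicWord π (p.map Prod.fst) ∧ IsLocalMorseWord π M B (p.map Prod.fst)) ∧
        (IsGeodesicWord π (p.map Prod.snd) ∧ IsLocalMorseWord π M B (p.map Prod.snd)) ∧
        wordEval π (p.map Prod.fst) = wordEval π (p.map Prod.snd)} : Language (A × A)) with hLdef
  set E1 : ℝ := max (M' 1 0) 0 with hE1
  set E2 : ℝ := max (M' 1 2) 0 with hE2
  set K : ℕ := ⌈B⌉₊ with hK
  set K₂n : ℕ := ⌈3 * E2 + 1⌉₊ with hK2n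
  set R₀ : ℕ := ⌈2 * E1⌉₊ with hR0
  set N : ℕ := K + ⌈E2⌉₊ with hN
  apply isRegular_of_finite_quot
  have hKB : B ≤ (K : ℝ) := Nat.le_ceil B
  have hK₂ : 3 * max (M' 1 2) 0 + 1 ≤ (K₂n : ℝ) := Nat.le_ceil _
  have hNK : K ≤ N := Nat.le_add_right _ _
  have hNE : max (M' 1 2) 0 ≤ (N : ℝ) := by
    calc max (M' 1 2) 0 = E2 := rfl
      _ ≤ (⌈E2⌉₊ : ℝ) := Nat.le_ceil _
      _ ≤ (N : ℝ) := by exact_mod_cast Nat.le_add_left _ _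
  have hR₀ : 2 * max (M' 1 0) 0 ≤ (R₀ : ℝ) := Nat.le_ceil _
  have hdata : ∀ p p', dataF π L K K₂n R₀ N p = dataF π L K K₂n R₀ N p' →
      langQuot L p = langQuot L p' := by
    intro p p' h
    exact quot_eq π hgen hsym hloc hKB hK₂ hNK hNE hR₀ L hLdef p p' h
  have hrange : Set.range (langQuot L) ⊆
      (fun d => if h : ∃ p, dataF π L K K₂n R₀ N p = d then langQuot L h.choose else ⊥) ''
        (Set.range (dataF π L K K₂n R₀ N)) := by
    rintro ℓ ⟨p, rfl⟩
    refine ⟨dataF π L K K₂n R₀ N p, ⟨p, rfl⟩, ?_⟩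
    have hex : ∃ p₀, dataF π L K K₂n R₀ N p₀ = dataF π L K K₂n R₀ N p := ⟨p, rfl⟩
    simp only [dif_pos hex]
    exact hdata _ _ hex.choose_spec
  exact Set.Finite.subset ((dataF_finite π hgen L K K₂n R₀ N).image _) hrange
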